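/- Under the hypotheses of the Hilbert-space Landweber convergence theorem with critical index ε = 0 (i.e., stability (1/√2)‖x − x̃‖ ≤ C_F‖F(x) − F(x̃)‖^{1/2}), if the stepsize μ and stability constant satisfy μL̂² + 2L·C_F² < 2, and c = (μ/4)(2 − μL̂² − 2L·C_F²)·C_F^{−4} > 0, then γ_k := (1/2)‖x_k − x†‖² satisfies γ_{k+1} ≤ γ_k − c·γ_k², and hence γ_k ≤ (γ_0^{−1} + c·k)^{−1} and x_k → x†. -/

import Mathlib

open InnerProductSpace RealInnerProductSpace


set_option maxHeartbeats 1000000 in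
theorem landweber_convergence_critical_index {X Y : Type*} [NormedAddCommGroup X]
    [InnerProductSpace ℝ X] [CompleteSpace X] [NormedAddCommGroup Y]
    [InnerProductSpace ℝ Y] [CompleteSpace Y]
    (B : Set X) (F : X → Y) (DF : X → X →L[ℝ] Y) (y : Y) (xd : X)
    (L Lhat CF μ : ℝ) (hL : 0 < L) (hLhat : 0 < Lhat) (hCF : 0 < CF)
    (hxd : xd ∈ B) (hy : F xd = y)
    (hDFb : ∀ x ∈ B, ‖DF x‖ ≤ Lhat)
    (hrem : ∀ x ∈ B, ∀ x' ∈ B,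
      ‖F x' - F x - DF x (x' - x)‖ ≤ (L / 2) * ‖x' - x‖ ^ 2)
    (hstab : ∀ x ∈ B, ∀ x' ∈ B,
      (1 / Real.sqrt 2) * ‖x - x'‖ ≤ CF * ‖F x - F x'‖ ^ ((1:ℝ) / 2))
    (hμ0 : 0 < μ) (hμ : μ * Lhat ^ 2 + 2 * L * CF ^ 2 < 2)
    (c : ℝ) (hc : c = (μ / 4) * (2 - μ * Lhat ^ 2 - 2 * L * CF ^ 2) * CF ^ (-4 : ℤ))
    (x : ℕ → X)
    (hiter : ∀ k, x (k + 1) =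
      x k - μ • (ContinuousLinearMap.adjoint (DF (x k))) (F (x k) - y))
    (hxB : ∀ k, x k ∈ B)
    (γ : ℕ → ℝ) (hγ : ∀ k, γ k = (1 / 2) * ‖x k - xd‖ ^ 2) :
    (∀ k, γ (k + 1) ≤ γ k - c * (γ k) ^ 2) ∧
      (∀ k : ℕ, γ k ≤ ((γ 0)⁻¹ + c * k)⁻¹) ∧
      Filter.Tendsto x Filter.atTop (nhds xd) := by
  have hD : 0 < 2 - μ * Lhat ^ 2 - 2 * L * CF ^ 2 := by linarith
  have hCF4 : CF ^ (-4 : ℤ) = (CF ^ 4)⁻¹ := by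
    rw [zpow_neg]; norm_cast
  have hcpos : 0 < c := by
    rw [hc, hCF4]; positivity
  have hγnn : ∀ k, 0 ≤ γ k := fun k => by rw [hγ k]; positivity
  have key : ∀ k, γ (k + 1) ≤ γ k - c * (γ k) ^ 2 := by
    intro k
    set u := x k - xd with hu
    set r := F (x k) - y with hr
    set A := DF (x k) with hA
    set v := (ContinuousLinearMap.adjoint A) r with hv
    clear_value u r A v
    have hxk := hxB k
    have hnormA : ‖A‖ ≤ Lhat := by rw [hA]; exact hDFb _ hxk
    -- remainder bound
    have herr : ‖A u - r‖ ≤ (L / 2) * ‖u‖ ^ 2 := by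
      have h1 : A u - r = F xd - F (x k) - A (xd - x k) := by
        rw [hr, hy.symm, hu, map_sub, map_sub]; abel
      rw [h1, hA, hu]
      calc ‖F xd - F (x k) - (DF (x k)) (xd - x k)‖ ≤ (L / 2) * ‖xd - x k‖ ^ 2 :=
            hrem _ hxk _ hxd
        _ = (L / 2) * ‖x k - xd‖ ^ 2 := by rw [norm_sub_rev]
    -- stability squared
    have hrxd : F (x k) - F xd = r := by rw [hr, hy]
    have hsq : ‖u‖ ^ 2 ≤ 2 * CF ^ 2 * ‖r‖ := by
      have h1 := hstab _ hxk _ hxd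
      rw [← hu] at h1
      rw [hrxd] at h1
      rw [← Real.sqrt_eq_rpow] at h1
      have h2 : (1 / Real.sqrt 2 * ‖u‖) ^ 2 ≤ (CF * Real.sqrt ‖r‖) ^ 2 := by
        apply pow_le_pow_left₀ (by positivity) h1
      have h3 : (Real.sqrt 2) ^ 2 = 2 := Real.sq_sqrt (by norm_num)
      have h4 : (Real.sqrt ‖r‖) ^ 2 = ‖r‖ := Real.sq_sqrt (norm_nonneg _)
      have h5 : (0:ℝ) < Real.sqrt 2 := by positivity
      rw [mul_pow, mul_pow, h4, div_pow, h3, one_pow] at h2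
      nlinarith
    have hAur : ⟪A u, r⟫_ℝ ≥ ‖r‖ ^ 2 - (L / 2) * ‖u‖ ^ 2 * ‖r‖ := by
      have h1 : ⟪A u, r⟫_ℝ = ‖r‖ ^ 2 + ⟪A u - r, r⟫_ℝ := by
        rw [inner_sub_left, real_inner_self_eq_norm_sq]; ring
      have h2 : ⟪A u - r, r⟫_ℝ ≥ -(‖A u - r‖ * ‖r‖) := by
        have := real_inner_le_norm (-(A u - r)) r
        rw [inner_neg_left, norm_neg] at this
        linarith
      have h3 : ‖A u - r‖ * ‖r‖ ≤ (L / 2) * ‖u‖ ^ 2 * ‖r‖ :=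
        mul_le_mul_of_nonneg_right herr (norm_nonneg _)
      linarith
    have hvnorm : ‖v‖ ≤ Lhat * ‖r‖ := by
      rw [hv]
      calc ‖(ContinuousLinearMap.adjoint A) r‖
          ≤ ‖ContinuousLinearMap.adjoint A‖ * ‖r‖ := ContinuousLinearMap.le_opNorm _ r
        _ = ‖A‖ * ‖r‖ := by rw [ContinuousLinearMap.adjoint.norm_map]
        _ ≤ Lhat * ‖r‖ := mul_le_mul_of_nonneg_right hnormA (norm_nonneg _)
    have hvsq : ‖v‖ ^ 2 ≤ Lhat ^ 2 * ‖r‖ ^ 2 := by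
      calc ‖v‖ ^ 2 ≤ (Lhat * ‖r‖) ^ 2 := pow_le_pow_left₀ (norm_nonneg v) hvnorm 2
        _ = Lhat ^ 2 * ‖r‖ ^ 2 := mul_pow _ _ _
    -- γ k ≤ CF^2 * ‖r‖
    have hgle : γ k ≤ CF ^ 2 * ‖r‖ := by
      rw [hγ k, ← hu]
      nlinarith
    have hg2 : (γ k) ^ 2 ≤ CF ^ 4 * ‖r‖ ^ 2 := by
      nlinarith [mul_self_le_mul_self (hγnn k) hgle]
    have hD2 : (0:ℝ) ≤ (μ / 4) * (2 - μ * Lhat ^ 2 - 2 * L * CF ^ 2) := by positivity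
    have hcg : c * (γ k) ^ 2
        ≤ (μ / 2) * (2 - μ * Lhat ^ 2 - 2 * L * CF ^ 2) * ‖r‖ ^ 2 := by
      rw [hc, hCF4]
      have hCF4pos : (0:ℝ) < CF ^ 4 := by positivity
      have b1 : (CF ^ 4)⁻¹ * (γ k) ^ 2 ≤ ‖r‖ ^ 2 := by
        rw [inv_mul_le_iff₀ hCF4pos]; exact hg2
      have b2 := mul_le_mul_of_nonneg_left b1 hD2
      have b3 : (0:ℝ) ≤ (μ / 4) * (2 - μ * Lhat ^ 2 - 2 * L * CF ^ 2) * ‖r‖ ^ 2 :=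
        mul_nonneg hD2 (sq_nonneg _)
      nlinarith [b2, b3]
    -- expansion of the norm
    have hexp : ‖x (k + 1) - xd‖ ^ 2
        = ‖u‖ ^ 2 - 2 * (μ * ⟪u, v⟫_ℝ) + μ ^ 2 * ‖v‖ ^ 2 := by
      have h1 : x (k + 1) - xd = u - μ • v := by
        rw [hiter k, hu, hv, hr, hA]; abel
      rw [h1, norm_sub_sq_real, real_inner_smul_right, norm_smul]
      rw [mul_pow]
      simp [Real.norm_eq_abs, sq_abs]
    have hinner : ⟪u, v⟫_ℝ = ⟪A u, r⟫_ℝ := by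
      rw [hv]; exact ContinuousLinearMap.adjoint_inner_right A u r
    have hmain : γ (k + 1)
        ≤ γ k - (μ / 2) * (2 - μ * Lhat ^ 2 - 2 * L * CF ^ 2) * ‖r‖ ^ 2 := by
      rw [hγ (k + 1), hexp, hinner, hγ k, ← hu]
      clear hexp
      generalize hip : ⟪A u, r⟫_ℝ = ip at hAur ⊢
      have a1 : μ * (‖r‖ ^ 2 - (L / 2) * ‖u‖ ^ 2 * ‖r‖) ≤ μ * ip :=
        mul_le_mul_of_nonneg_left hAur hμ0.le
      have a2 : μ ^ 2 * ‖v‖ ^ 2 ≤ μ ^ 2 * (Lhat ^ 2 * ‖r‖ ^ 2) :=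
        mul_le_mul_of_nonneg_left hvsq (sq_nonneg μ)
      have h5 : ‖u‖ ^ 2 * ‖r‖ ≤ 2 * CF ^ 2 * ‖r‖ ^ 2 := by
        nlinarith [mul_le_mul_of_nonneg_right hsq (norm_nonneg r)]
      have a3 : (μ * L) * (‖u‖ ^ 2 * ‖r‖) ≤ (μ * L) * (2 * CF ^ 2 * ‖r‖ ^ 2) :=
        mul_le_mul_of_nonneg_left h5 (by positivity)
      nlinarith [a1, a2, a3]
    linarith
  have hbound : ∀ k : ℕ, γ k ≤ ((γ 0)⁻¹ + c * k)⁻¹ := by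
    intro k
    induction k with
    | zero => simp
    | succ k ih =>
      have hb0 : 0 ≤ (γ 0)⁻¹ := inv_nonneg.mpr (hγnn 0)
      have hbk1 : 0 < (γ 0)⁻¹ + c * ((k : ℝ) + 1) := by nlinarith [Nat.cast_nonneg (α := ℝ) k]
      by_cases h0 : γ (k + 1) ≤ 0
      · refine le_trans h0 (inv_nonneg.mpr hbk1.le) |>.trans (le_of_eq ?_)
        push_cast; ring_nf
      push_neg at h0
      have hk0 : 0 < γ k := by
        by_contra h; push_neg at h
        have h1 := key k
        have h2 := hγnn k
        nlinarith
      have hpos : 0 < γ k - c * (γ k) ^ 2 := lt_of_lt_of_le h0 (key k)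
      have hne : γ k ≠ 0 := ne_of_gt hk0
      have hbk : 0 < (γ 0)⁻¹ + c * (k : ℝ) := by
        by_contra hcon; push_neg at hcon
        have : ((γ 0)⁻¹ + c * (k : ℝ))⁻¹ ≤ 0 := inv_nonpos.mpr hcon
        linarith [ih]
      have hinv1 : (γ 0)⁻¹ + c * (k : ℝ) ≤ (γ k)⁻¹ := by
        have := (inv_le_inv₀ (inv_pos.mpr hbk) hk0).mpr ih
        rwa [inv_inv] at this
      have h3 : (γ k)⁻¹ + c ≤ (γ k - c * (γ k) ^ 2)⁻¹ := by
        have h1 : ((γ k)⁻¹ + c) * (γ k - c * (γ k) ^ 2) = 1 - c ^ 2 * (γ k) ^ 2 := by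
          field_simp; ring
        rw [show (γ k - c * (γ k) ^ 2)⁻¹ = 1 / (γ k - c * (γ k) ^ 2) from
          inv_eq_one_div _, le_div_iff₀ hpos, h1]
        nlinarith [sq_nonneg (c * γ k)]
      have h4 : (γ k - c * (γ k) ^ 2)⁻¹ ≤ (γ (k + 1))⁻¹ :=
        inv_anti₀ h0 (key k)
      have hinv3 : (γ 0)⁻¹ + c * ((k : ℝ) + 1) ≤ (γ (k + 1))⁻¹ := by
        have := h3.trans h4; linarith
      have hfin : γ (k + 1) ≤ ((γ 0)⁻¹ + c * ((k : ℝ) + 1))⁻¹ := by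
        have := (inv_le_inv₀ (lt_of_lt_of_le hbk1 hinv3) hbk1).mpr hinv3
        rwa [inv_inv] at this
      refine hfin.trans (le_of_eq ?_)
      push_cast; ring_nf
  refine ⟨key, hbound, ?_⟩
  have htop : Filter.Tendsto (fun k : ℕ => ((γ 0)⁻¹ + c * k)⁻¹)
      Filter.atTop (nhds 0) := by
    apply Filter.Tendsto.inv_tendsto_atTop
    apply Filter.tendsto_atTop_add_const_left
    exact (tendsto_natCast_atTop_atTop (R := ℝ)).const_mul_atTop hcpos
  have hγ0 : Filter.Tendsto γ Filter.atTop (nhds 0) :=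
    squeeze_zero hγnn hbound htop
  have h1 : ∀ k, ‖x k - xd‖ = Real.sqrt (2 * γ k) := by
    intro k
    rw [hγ k, show (2:ℝ) * (1 / 2 * ‖x k - xd‖ ^ 2) = ‖x k - xd‖ ^ 2 by ring,
      Real.sqrt_sq (norm_nonneg _)]
  have h2 : Filter.Tendsto (fun k => Real.sqrt (2 * γ k)) Filter.atTop
      (nhds (Real.sqrt (2 * 0))) :=
    (Real.continuous_sqrt.tendsto _).comp (hγ0.const_mul 2)
  have h3 : Filter.Tendsto (fun k => ‖x k - xd‖) Filter.atTop (nhds 0) := by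
    simp_rw [h1]
    simpa using h2
  rw [tendsto_iff_norm_sub_tendsto_zero]
  exact h3
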